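/- In the coin-toss model, consider the mechanism q* with release space {(0,1), (1/2,1)} defined by q*((0,1) | X=0) = 1, q*((0,1) | X=1) = 3/10, and q*((1/2,1) | X=1) = 7/10. Then for each release value (i,j) of positive probability, i is a Bayes-optimal decision for Bob and j is a Bayes-optimal decision for Eve given that release value; the resulting integrated risks are R_B(q*) = 13/40 and R_E(q*) = 3/4, so that R_A(q*) = 13/40 − (3/4)λ, which is strictly smaller than the optimal randomised-response risk 19/52 − (3/4)λ for every λ > 0. -/

import Mathlib

open scoped BigOperators

namespace CoinToss

/-- The parameter θ ∈ {0, 1/2}, encoded by a Bool: `false ↦ 0`, `true ↦ 1/2`. -/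
noncomputable def thetaVal (t : Bool) : ℝ := if t then 1/2 else 0

/-- Joint pmf of (θ, X): prior P(θ=0)=P(θ=1/2)=1/2 and X | θ ~ Bern(θ). -/
noncomputable def coinJoint (t x : Bool) : ℝ :=
  if t then 1/4 else (if x then 0 else 1/2)

/-- Bob's 0-1 loss L_B(θ, δ) = 1{δ ≠ θ}. -/
noncomputable def LB (θ δ : ℝ) : ℝ := if δ = θ then 0 else 1

/-- Eve's loss: 0 if δ = x, 1 if (δ,x)=(1,0), 10 if (δ,x)=(0,1). -/
noncomputable def LE (x δ : Bool) : ℝ := if δ = x then 0 else if δ then 1 else 10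

variable {H : Type*} [Fintype H]

/-- A release mechanism: Markov kernel from the data space {0,1} to a finite release space. -/
def IsMechanism (q : Bool → H → ℝ) : Prop :=
  (∀ x h, 0 ≤ q x h) ∧ ∀ x, ∑ h, q x h = 1

/-- Probability of the release value `h` under the joint law of (θ, X, η). -/
noncomputable def relP (q : Bool → H → ℝ) (h : H) : ℝ :=
  ∑ t, ∑ x, coinJoint t x * q x h

/-- Bob's posterior expected loss of decision `d` given release value `h`. -/
noncomputable def postLossB (q : Bool → H → ℝ) (h : H) (d : ℝ) : ℝ :=
  (∑ t, ∑ x, coinJoint t x * q x h * LB (thetaVal t) d) / relP q h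

/-- Eve's posterior expected loss of decision `d` given release value `h`. -/
noncomputable def postLossE (q : Bool → H → ℝ) (h : H) (d : Bool) : ℝ :=
  (∑ t, ∑ x, coinJoint t x * q x h * LE x d) / relP q h

/-- Bayes optimality for Bob: at every release value of positive probability, the rule takes
values in the decision space {0, 1/2} and minimizes the posterior expected loss there. -/
def IsBayesB (q : Bool → H → ℝ) (dB : H → ℝ) : Prop :=
  ∀ h, 0 < relP q h →
    dB h ∈ ({0, 1/2} : Set ℝ) ∧
    ∀ d ∈ ({0, 1/2} : Set ℝ), postLossB q h (dB h) ≤ postLossB q h d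

/-- Bayes optimality for Eve. -/
def IsBayesE (q : Bool → H → ℝ) (dE : H → Bool) : Prop :=
  ∀ h, 0 < relP q h → ∀ d : Bool, postLossE q h (dE h) ≤ postLossE q h d

/-- Bob's integrated risk R_B(q) = E[L_B(θ, δ_B(η))]. -/
noncomputable def RB (q : Bool → H → ℝ) (dB : H → ℝ) : ℝ :=
  ∑ t, ∑ x, ∑ h, coinJoint t x * q x h * LB (thetaVal t) (dB h)

/-- Eve's integrated risk R_E(q) = E[L_E(X, δ_E(η))]. -/
noncomputable def RE (q : Bool → H → ℝ) (dE : H → Bool) : ℝ :=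
  ∑ t, ∑ x, ∑ h, coinJoint t x * q x h * LE x (dE h)

end CoinToss

open CoinToss

namespace CoinToss
/-- The optimal mechanism from the linear program. Its release space is
{(0,1), (1/2,1)} ⊆ 𝒟_B × 𝒟_E, encoded as Bool × Bool where the first coordinate encodes
Bob's decision via `thetaVal` (false ↦ 0, true ↦ 1/2) and the second is Eve's decision
(true ↦ 1). It satisfies q*((0,1)|X=0)=1, q*((0,1)|X=1)=3/10, q*((1/2,1)|X=1)=7/10. -/
noncomputable def qstar : Bool → Bool × Bool → ℝ := fun x h =>
  if x then (if h = (false, true) then 3/10 else if h = (true, true) then 7/10 else 0)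
  else (if h = (false, true) then 1 else 0)
end CoinToss

/-- In the coin-toss model, under the mechanism q* the rules δ_B(i,j) = i and δ_E(i,j) = j
are Bayes-optimal at every release value of positive probability, with integrated risks
R_B(q*) = 13/40 and R_E(q*) = 3/4, so R_A(q*) = 13/40 - (3/4)λ, which is strictly smaller
than the optimal randomised-response risk 19/52 - (3/4)λ for every λ > 0. -/
theorem coin_toss_linear_program :
    IsBayesB qstar (fun h => thetaVal h.1) ∧
    IsBayesE qstar (fun h => h.2) ∧
    RB qstar (fun h => thetaVal h.1) = 13/40 ∧
    RE qstar (fun h => h.2) = 3/4 ∧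
    ∀ lam : ℝ, 0 < lam →
      RB qstar (fun h => thetaVal h.1) - lam * RE qstar (fun h => h.2)
        = 13/40 - 3/4 * lam ∧
      13/40 - 3/4 * lam < 19/52 - 3/4 * lam := by
  refine ⟨?_, ?_, ?_, ?_, ?_⟩
  · intro h hp
    fin_cases h <;>
      simp only [relP, postLossB, qstar, coinJoint, thetaVal, LB, IsBayesB,
        Fintype.sum_bool, Fintype.sum_prod_type] at hp ⊢ <;>
      norm_num at hp <;> norm_num <;>
      refine ⟨by norm_num, ?_⟩ <;>
      rintro d (rfl | rfl) <;> norm_num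
  · intro h hp
    fin_cases h <;>
      simp only [relP, postLossE, qstar, coinJoint, CoinToss.LE,
        Fintype.sum_bool, Fintype.sum_prod_type, Bool.forall_bool] at hp ⊢ <;>
      norm_num at hp <;> norm_num
  · simp only [RB, qstar, coinJoint, thetaVal, LB, Fintype.sum_bool, Fintype.sum_prod_type]
    norm_num
  · simp only [RE, qstar, coinJoint, CoinToss.LE, Fintype.sum_bool, Fintype.sum_prod_type]
    norm_num
  · intro lam hl
    constructor
    · simp only [RB, RE, qstar, coinJoint, thetaVal, LB, CoinToss.LE, Fintype.sum_bool,
        Fintype.sum_prod_type]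
      norm_num
      ring
    · norm_num
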